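/- Let (V,⊗,I) be a symmetric monoidal closed category and (T,φ,η,μ) a symmetric monoidal monad on V. Given T-algebras (X,x) and (Y,y), the composite [1_{TX}, y] ∘ T_{X,Y} : [X,Y] → [TX,Y] is a T-algebra morphism, where [X,Y] and [TX,Y] are equipped with their pointwise T-algebra structures. -/

import Mathlib

open CategoryTheory MonoidalCategory Limits

universe v u

/-- A symmetric monoidal monad on a symmetric monoidal category. -/
structure SymMonoidalMonadStr (C : Type u) [Category.{v} C] [MonoidalCategory C]
    [SymmetricCategory C] (T : Monad C) where
  φ : ∀ A B : C, T.obj A ⊗ T.obj B ⟶ T.obj (A ⊗ B)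
  ε : 𝟙_ C ⟶ T.obj (𝟙_ C)
  φ_natural : ∀ {A B A' B' : C} (f : A ⟶ A') (g : B ⟶ B'),
    (T.map f ⊗ₘ T.map g) ≫ φ A' B' = φ A B ≫ T.map (f ⊗ₘ g)
  φ_assoc : ∀ A B C' : C,
    (φ A B ⊗ₘ 𝟙 (T.obj C')) ≫ φ (A ⊗ B) C' ≫ T.map (α_ A B C').hom
      = (α_ (T.obj A) (T.obj B) (T.obj C')).hom ≫ (𝟙 (T.obj A) ⊗ₘ φ B C') ≫ φ A (B ⊗ C')
  φ_left_unit : ∀ A : C,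
    (λ_ (T.obj A)).hom = (ε ⊗ₘ 𝟙 (T.obj A)) ≫ φ (𝟙_ C) A ≫ T.map (λ_ A).hom
  φ_right_unit : ∀ A : C,
    (ρ_ (T.obj A)).hom = (𝟙 (T.obj A) ⊗ₘ ε) ≫ φ A (𝟙_ C) ≫ T.map (ρ_ A).hom
  φ_braided : ∀ A B : C,
    (β_ (T.obj A) (T.obj B)).hom ≫ φ B A = φ A B ≫ T.map (β_ A B).hom
  η_tensor : ∀ A B : C, (T.η.app A ⊗ₘ T.η.app B) ≫ φ A B = T.η.app (A ⊗ B)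
  η_unit : ε = T.η.app (𝟙_ C)
  μ_tensor : ∀ A B : C,
    φ (T.obj A) (T.obj B) ≫ T.map (φ A B) ≫ T.μ.app (A ⊗ B)
      = (T.μ.app A ⊗ₘ T.μ.app B) ≫ φ A B
  μ_unit : ε ≫ T.map ε ≫ T.μ.app (𝟙_ C) = ε

variable {V : Type u} [Category.{v} V] [MonoidalCategory V] [SymmetricCategory V]
  [MonoidalClosed V]

/-- The right evaluation `[X,Y] ⊗ X ⟶ Y` associated to the internal hom. -/
noncomputable def rev (X Y : V) : (ihom X).obj Y ⊗ X ⟶ Y :=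
  (β_ ((ihom X).obj Y) X).hom ≫ (ihom.ev X).app Y

/-- The adjunct `Z ⟶ [X,Y]` of a morphism `Z ⊗ X ⟶ Y` with respect to right
evaluation: it is the unique map `h` with `(h ⊗ 𝟙) ≫ rev X Y = g`. -/
noncomputable def radj {Z X Y : V} (g : Z ⊗ X ⟶ Y) : Z ⟶ (ihom X).obj Y :=
  MonoidalClosed.curry ((β_ X Z).hom ≫ g)

/-- The pointwise `T`-action on the internal hom `[X,Y]`, for `X` an object of `V` and
`y : TY ⟶ Y` a `T`-algebra structure: the adjunct of
`y ∘ T(rev) ∘ φ ∘ (1 ⊗ η_X) : T[X,Y] ⊗ X ⟶ Y`. -/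
noncomputable def ptAct (T : Monad V) (M : SymMonoidalMonadStr V T) (X Y : V)
    (y : T.obj Y ⟶ Y) : T.obj ((ihom X).obj Y) ⟶ (ihom X).obj Y :=
  radj ((𝟙 (T.obj ((ihom X).obj Y)) ⊗ₘ T.η.app X) ≫ M.φ ((ihom X).obj Y) X
    ≫ T.map (rev X Y) ≫ y)

/-- The morphism `T_{X,Y} : [X,Y] ⟶ [TX,TY]`, the adjunct of
`T(rev) ∘ φ ∘ (η_{[X,Y]} ⊗ 1_{TX}) : [X,Y] ⊗ TX ⟶ TY`. -/
noncomputable def THom (T : Monad V) (M : SymMonoidalMonadStr V T) (X Y : V) :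
    (ihom X).obj Y ⟶ (ihom (T.obj X)).obj (T.obj Y) :=
  radj ((T.η.app ((ihom X).obj Y) ⊗ₘ 𝟙 (T.obj X)) ≫ M.φ ((ihom X).obj Y) X
    ≫ T.map (rev X Y))

/-- The precomposition map `[x, 1_Y] : [X,Y] ⟶ [X',Y]` induced by `x : X' ⟶ X`. -/
noncomputable def preHom {X X' : V} (x : X' ⟶ X) (Y : V) :
    (ihom X).obj Y ⟶ (ihom X').obj Y :=
  radj ((((ihom X).obj Y) ◁ x) ≫ rev X Y)

lemma radj_rev {Z X Y : V} (g : Z ⊗ X ⟶ Y) : (radj g ⊗ₘ 𝟙 X) ≫ rev X Y = g := by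
  unfold radj rev
  rw [← Category.assoc, BraidedCategory.braiding_naturality]
  have : (𝟙 X ⊗ₘ MonoidalClosed.curry ((β_ X Z).hom ≫ g)) ≫ (ihom.ev X).app Y
      = MonoidalClosed.uncurry (MonoidalClosed.curry ((β_ X Z).hom ≫ g)) := by
    rw [MonoidalClosed.uncurry_eq, MonoidalCategory.id_tensorHom]
  rw [Category.assoc, this, MonoidalClosed.uncurry_curry, ← Category.assoc,
    SymmetricCategory.symmetry, Category.id_comp]

lemma rev_ext {Z X Y : V} {h₁ h₂ : Z ⟶ (ihom X).obj Y}
    (w : (h₁ ⊗ₘ 𝟙 X) ≫ rev X Y = (h₂ ⊗ₘ 𝟙 X) ≫ rev X Y) : h₁ = h₂ := by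
  have key : ∀ h : Z ⟶ (ihom X).obj Y,
      MonoidalClosed.uncurry h = (β_ X Z).hom ≫ (h ⊗ₘ 𝟙 X) ≫ rev X Y := by
    intro h
    rw [MonoidalClosed.uncurry_eq]
    unfold rev
    rw [← Category.assoc, ← BraidedCategory.braiding_naturality, MonoidalCategory.id_tensorHom,
      Category.assoc, SymmetricCategory.symmetry_assoc]
  apply MonoidalClosed.uncurry_injective
  rw [key, key, w]

lemma ihom_map_rev {A Y Y' : V} (y : Y ⟶ Y') :
    ((ihom A).map y ⊗ₘ 𝟙 A) ≫ rev A Y' = rev A Y ≫ y := by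
  unfold rev
  rw [← Category.assoc, BraidedCategory.braiding_naturality, Category.assoc,
    MonoidalCategory.id_tensorHom]
  have := (ihom.ev A).naturality y
  simp only [Functor.comp_map, Functor.id_map] at this
  rw [Category.assoc, ← this]
  rfl

lemma chain (T : Monad V) (M : SymMonoidalMonadStr V T) {H A B : V} (e : H ⊗ A ⟶ B)
    (y : T.obj B ⟶ B) (hy : T.map y ≫ y = T.μ.app B ≫ y)
    {C₁ C₂ O₁ O₂ : V} (c₁ : C₁ ⟶ T.obj H) (c₂ : C₂ ⟶ T.obj A)
    (o₁ : O₁ ⟶ T.obj C₁) (o₂ : O₂ ⟶ T.obj C₂) :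
    (o₁ ⊗ₘ o₂) ≫ M.φ C₁ C₂ ≫ T.map ((c₁ ⊗ₘ c₂) ≫ M.φ H A ≫ T.map e ≫ y) ≫ y
      = ((o₁ ≫ T.map c₁ ≫ T.μ.app H) ⊗ₘ (o₂ ≫ T.map c₂ ≫ T.μ.app A))
          ≫ M.φ H A ≫ T.map e ≫ y := by
  have hμ : T.map (T.map e) ≫ T.μ.app B = T.μ.app (H ⊗ A) ≫ T.map e := T.μ.naturality e
  simp only [Functor.map_comp, Category.assoc]
  rw [hy, reassoc_of% hμ, ← reassoc_of% (M.φ_natural c₁ c₂), reassoc_of% (M.μ_tensor H A),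
    MonoidalCategory.tensorHom_comp_tensorHom_assoc,
    MonoidalCategory.tensorHom_comp_tensorHom_assoc]
  simp only [Category.assoc]

/-- for `T`-algebras `(X,x)` and `(Y,y)`, the composite
`[1_{TX}, y] ∘ T_{X,Y} : [X,Y] ⟶ [TX,Y]` is a morphism of `T`-algebras, where `[X,Y]`
and `[TX,Y]` carry their pointwise `T`-algebra structures. -/
theorem THom_comp_postcompose_is_algebra_hom (T : Monad V) (M : SymMonoidalMonadStr V T)
    (X Y : T.Algebra) :
    T.map (THom T M X.A Y.A ≫ (ihom (T.obj X.A)).map Y.a)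
        ≫ ptAct T M (T.obj X.A) Y.A Y.a
      = ptAct T M X.A Y.A Y.a ≫ (THom T M X.A Y.A ≫ (ihom (T.obj X.A)).map Y.a) := by
  apply rev_ext
  have hy : T.map Y.a ≫ Y.a = T.μ.app Y.A ≫ Y.a := (Y.assoc).symm
  -- uncurried form of f := THom ≫ [1, y]
  have huf : ((THom T M X.A Y.A ≫ (ihom (T.obj X.A)).map Y.a) ⊗ₘ 𝟙 (T.obj X.A))
        ≫ rev (T.obj X.A) Y.A
      = (T.η.app ((ihom X.A).obj Y.A) ⊗ₘ 𝟙 (T.obj X.A))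
          ≫ M.φ ((ihom X.A).obj Y.A) X.A ≫ T.map (rev X.A Y.A) ≫ Y.a := by
    rw [MonoidalCategory.comp_tensor_id, Category.assoc, ihom_map_rev,
      ← Category.assoc, THom, radj_rev]
    simp only [Category.assoc]
  -- LHS
  rw [MonoidalCategory.comp_tensor_id, Category.assoc, ptAct, radj_rev]
  -- RHS
  conv_rhs => rw [MonoidalCategory.comp_tensor_id, Category.assoc, huf]
  -- rearrange LHS into chain form
  have l1 : (T.map (THom T M X.A Y.A ≫ (ihom (T.obj X.A)).map Y.a) ⊗ₘ 𝟙 (T.obj X.A))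
        ≫ (𝟙 (T.obj ((ihom (T.obj X.A)).obj Y.A)) ⊗ₘ T.η.app (T.obj X.A))
      = (𝟙 (T.obj ((ihom X.A).obj Y.A)) ⊗ₘ T.η.app (T.obj X.A))
          ≫ (T.map (THom T M X.A Y.A ≫ (ihom (T.obj X.A)).map Y.a) ⊗ₘ T.map (𝟙 (T.obj X.A))) := by
    rw [MonoidalCategory.tensorHom_comp_tensorHom, MonoidalCategory.tensorHom_comp_tensorHom]
    simp
  conv_lhs => rw [← Category.assoc, l1, Category.assoc,
    reassoc_of% (M.φ_natural (THom T M X.A Y.A ≫ (ihom (T.obj X.A)).map Y.a) (𝟙 (T.obj X.A))),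
    ← Functor.map_comp_assoc, huf]
  -- rearrange RHS into chain form
  have r1 : (ptAct T M X.A Y.A Y.a ⊗ₘ 𝟙 (T.obj X.A))
        ≫ (T.η.app ((ihom X.A).obj Y.A) ⊗ₘ 𝟙 (T.obj X.A))
      = (T.η.app (T.obj ((ihom X.A).obj Y.A)) ⊗ₘ 𝟙 (T.obj X.A))
          ≫ (T.map (ptAct T M X.A Y.A Y.a) ⊗ₘ T.map (𝟙 X.A)) := by
    rw [MonoidalCategory.tensorHom_comp_tensorHom, MonoidalCategory.tensorHom_comp_tensorHom]
    have := T.η.naturality (ptAct T M X.A Y.A Y.a)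
    simp only [Functor.id_map] at this
    simp [this]
  have hp : (ptAct T M X.A Y.A Y.a ⊗ₘ 𝟙 X.A) ≫ rev X.A Y.A
      = (𝟙 (T.obj ((ihom X.A).obj Y.A)) ⊗ₘ T.η.app X.A) ≫ M.φ ((ihom X.A).obj Y.A) X.A
          ≫ T.map (rev X.A Y.A) ≫ Y.a := by rw [ptAct, radj_rev]
  conv_rhs => rw [← Category.assoc, r1, Category.assoc,
    reassoc_of% (M.φ_natural (ptAct T M X.A Y.A Y.a) (𝟙 X.A)),
    ← Functor.map_comp_assoc, hp]
  -- apply the chain lemma to both sides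
  have L := chain T M (rev X.A Y.A) Y.a hy (T.η.app ((ihom X.A).obj Y.A)) (𝟙 (T.obj X.A))
    (𝟙 (T.obj ((ihom X.A).obj Y.A))) (T.η.app (T.obj X.A))
  have R := chain T M (rev X.A Y.A) Y.a hy (𝟙 (T.obj ((ihom X.A).obj Y.A))) (T.η.app X.A)
    (T.η.app (T.obj ((ihom X.A).obj Y.A))) (𝟙 (T.obj X.A))
  simp only [Functor.id_obj] at L R
  rw [L, R]
  simp
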